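/- Let F: ℝⁿ → ℝⁿ be differentiable with F(z) > 0 and F'(z) entrywise strictly positive for all z > 0, and suppose F'(z)·z ≤ μ·F(z) entrywise for all z > 0. Then for all z > 0 and all λ ≥ 1, F(λz) ≤ λ^μ · F(z) entrywise. -/

import Mathlib

/-- Euler-type characterization, forward direction: if F is differentiable, positive with
entrywise positive Jacobian on the positive orthant, and F'(z)·z ≤ μ·F(z) entrywise there,
then F(λz) ≤ λ^μ·F(z) entrywise for λ ≥ 1. -/
theorem subhom_implies_scaling (n : ℕ) (μ : ℝ) (hμ : 0 < μ)
    (F : (Fin n → ℝ) → (Fin n → ℝ)) (hdiff : Differentiable ℝ F)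
    (hpos : ∀ z : Fin n → ℝ, (∀ i, 0 < z i) → ∀ i, 0 < F z i)
    (hjac : ∀ z : Fin n → ℝ, (∀ i, 0 < z i) → ∀ i j, 0 < fderiv ℝ F z (Pi.single j 1) i)
    (hsub : ∀ z : Fin n → ℝ, (∀ i, 0 < z i) → ∀ i, fderiv ℝ F z z i ≤ μ * F z i) :
    ∀ z : Fin n → ℝ, (∀ i, 0 < z i) → ∀ lam : ℝ, 1 ≤ lam →
      ∀ i, F (lam • z) i ≤ lam ^ μ * F z i := by
  intro z hz lam hlam i
  set φ : ℝ → ℝ := fun t => F (t • z) i * t ^ (-μ) with hφdef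
  -- derivative of t ↦ F (t • z) i
  have hderivF : ∀ t : ℝ, HasDerivAt (fun s : ℝ => F (s • z) i)
      ((fderiv ℝ F (t • z)) z i) t := by
    intro t
    have h1 : HasDerivAt (fun s : ℝ => s • z) z t := by
      simpa using (hasDerivAt_id t).smul_const z
    have h2 : HasDerivAt (fun s : ℝ => F (s • z)) ((fderiv ℝ F (t • z)) z) t :=
      ((hdiff (t • z)).hasFDerivAt.comp_hasDerivAt t h1)
    exact (hasDerivAt_pi.mp h2) i
  have hderivφ : ∀ t : ℝ, 0 < t → HasDerivAt φ
      ((fderiv ℝ F (t • z)) z i * t ^ (-μ) + F (t • z) i * (-μ * t ^ (-μ - 1))) t := by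
    intro t ht
    have hr : HasDerivAt (fun s : ℝ => s ^ (-μ)) (-μ * t ^ (-μ - 1)) t :=
      Real.hasDerivAt_rpow_const (Or.inl (ne_of_gt ht))
    exact (hderivF t).mul hr
  -- deriv nonpos for t > 0
  have hnonpos : ∀ t : ℝ, 0 < t →
      (fderiv ℝ F (t • z)) z i * t ^ (-μ) + F (t • z) i * (-μ * t ^ (-μ - 1)) ≤ 0 := by
    intro t ht
    have hwpos : ∀ j, 0 < (t • z) j := fun j => by
      simpa using mul_pos ht (hz j)
    have hB : 0 < F (t • z) i := hpos _ hwpos i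
    have hkey : (fderiv ℝ F (t • z)) (t • z) i ≤ μ * F (t • z) i := hsub _ hwpos i
    have hlin : (fderiv ℝ F (t • z)) (t • z) i = t * (fderiv ℝ F (t • z)) z i := by
      rw [map_smul]; rfl
    have hA : (fderiv ℝ F (t • z)) z i ≤ μ * F (t • z) i / t := by
      rw [le_div_iff₀ ht]
      nlinarith [hkey, hlin]
    have hrp : (0:ℝ) < t ^ (-μ) := Real.rpow_pos_of_pos ht _
    have hsplit : t ^ (-μ - 1) = t ^ (-μ) / t := by
      rw [Real.rpow_sub ht, Real.rpow_one]
    calc (fderiv ℝ F (t • z)) z i * t ^ (-μ) + F (t • z) i * (-μ * t ^ (-μ - 1))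
        ≤ (μ * F (t • z) i / t) * t ^ (-μ) + F (t • z) i * (-μ * (t ^ (-μ) / t)) := by
          rw [hsplit]
          exact add_le_add_left (mul_le_mul_of_nonneg_right hA hrp.le) _
      _ = 0 := by field_simp; ring
  -- φ antitone on Ici 1
  have hcont : ContinuousOn φ (Set.Ici 1) := by
    intro t ht
    exact ((hderivφ t (lt_of_lt_of_le one_pos ht)).continuousAt).continuousWithinAt
  have hanti : AntitoneOn φ (Set.Ici 1) := by
    apply antitoneOn_of_deriv_nonpos (convex_Ici 1) hcont
    · intro t ht
      rw [interior_Ici] at ht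
      exact ((hderivφ t (lt_trans one_pos ht)).differentiableAt).differentiableWithinAt
    · intro t ht
      rw [interior_Ici] at ht
      rw [(hderivφ t (lt_trans one_pos ht)).deriv]
      exact hnonpos t (lt_trans one_pos ht)
  have h1 : φ lam ≤ φ 1 := hanti Set.self_mem_Ici hlam hlam
  have hφ1 : φ 1 = F z i := by simp [hφdef]
  have hφlam : φ lam = F (lam • z) i * lam ^ (-μ) := rfl
  have hlampos : (0:ℝ) < lam := lt_of_lt_of_le one_pos hlam
  have hlp : (0:ℝ) < lam ^ μ := Real.rpow_pos_of_pos hlampos _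
  have : F (lam • z) i * lam ^ (-μ) ≤ F z i := by rw [← hφ1]; exact h1
  calc F (lam • z) i = (F (lam • z) i * lam ^ (-μ)) * lam ^ μ := by
        rw [mul_assoc, ← Real.rpow_add hlampos]; simp
    _ ≤ F z i * lam ^ μ := mul_le_mul_of_nonneg_right this hlp.le
    _ = lam ^ μ * F z i := mul_comm _ _
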